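/- arXiv:0907.2228 — 2 statements merged into one kernel-verified Lean document; each statement's English description precedes it below -/
import Mathlib

section
/- Let γ : [0,1] → ℝ^d be a continuous curve, and for z ∈ Z^d let C_z = [z−1/2, z+1/2)^d be the unit cube centered at z. Then the set Γ = { z ∈ Z^d : γ([0,1]) ∩ C_z ≠ ∅ } of cubes met by γ is *-connected, where z, z' are *-adjacent iff max_i |z^i − z'^i| ≤ 1. -/
def starAdj {d : ℕ} (z z' : Fin d → ℤ) : Prop := ∀ i, |z i - z' i| ≤ 1

def starConnected {d : ℕ} (Γ : Set (Fin d → ℤ)) : Prop :=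
  ∀ a ∈ Γ, ∀ b ∈ Γ, ∃ l : List (Fin d → ℤ),
    l.Chain' starAdj ∧ l.head? = some a ∧ l.getLast? = some b ∧ ∀ z ∈ l, z ∈ Γ

/-- `x` lies in the unit cube `C_z = [z - 1/2, z + 1/2)^d` centered at the lattice point `z`. -/
def inCube {d : ℕ} (z : Fin d → ℤ) (x : EuclideanSpace ℝ (Fin d)) : Prop :=
  ∀ i, (z i : ℝ) - 1/2 ≤ x i ∧ x i < (z i : ℝ) + 1/2

/-- The lattice point whose cube contains `x`. -/
noncomputable def zfun {d : ℕ} (x : EuclideanSpace ℝ (Fin d)) : Fin d → ℤ := fun i => ⌊x i + 1/2⌋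

lemma inCube_iff {d : ℕ} (z : Fin d → ℤ) (x : EuclideanSpace ℝ (Fin d)) :
    inCube z x ↔ z = zfun x := by
  simp only [inCube, zfun, funext_iff]
  refine forall_congr' fun i => ?_
  rw [eq_comm, Int.floor_eq_iff]
  push_cast
  constructor <;> rintro ⟨h1, h2⟩ <;> constructor <;> linarith

lemma floor_adj {x y : ℝ} (h : |x - y| ≤ 1) : |⌊x⌋ - ⌊y⌋| ≤ 1 := by
  rw [abs_le] at h ⊢
  have h1 : ⌊y⌋ ≤ ⌊x + 1⌋ := Int.floor_le_floor (by linarith [h.1])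
  have h2 : ⌊x⌋ ≤ ⌊y + 1⌋ := Int.floor_le_floor (by linarith [h.2])
  have e1 : ⌊x + (1:ℝ)⌋ = ⌊x⌋ + 1 := by exact_mod_cast Int.floor_add_intCast x 1
  have e2 : ⌊y + (1:ℝ)⌋ = ⌊y⌋ + 1 := by exact_mod_cast Int.floor_add_intCast y 1
  omega

lemma coord_dist_le {d : ℕ} (x y : EuclideanSpace ℝ (Fin d)) (i : Fin d) :
    dist (x i) (y i) ≤ dist x y := by
  rw [EuclideanSpace.dist_eq]
  have h : dist (x i) (y i) ^ 2 ≤ ∑ j, dist (x j) (y j) ^ 2 :=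
    Finset.single_le_sum (f := fun j => dist (x j) (y j) ^ 2) (fun j _ => sq_nonneg _) (Finset.mem_univ i)
  calc dist (x i) (y i) = Real.sqrt (dist (x i) (y i) ^ 2) :=
        (Real.sqrt_sq dist_nonneg).symm
    _ ≤ Real.sqrt (∑ j, dist (x j) (y j) ^ 2) := Real.sqrt_le_sqrt h

/-- The set of lattice points whose cubes are met by a continuous curve is `*`-connected. -/
theorem curve_trace_starConnected (d : ℕ) (hd : 2 ≤ d)
    (γ : ℝ → EuclideanSpace ℝ (Fin d)) (hγ : ContinuousOn γ (Set.Icc 0 1)) :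
    starConnected {z : Fin d → ℤ | ∃ t ∈ Set.Icc (0:ℝ) 1, inCube z (γ t)} := by
  intro a ha b hb
  obtain ⟨s, hs, hsa⟩ := ha
  obtain ⟨t, ht, htb⟩ := hb
  rw [inCube_iff] at hsa htb
  have hu : UniformContinuousOn γ (Set.Icc 0 1) :=
    isCompact_Icc.uniformContinuousOn_of_continuous hγ
  rw [Metric.uniformContinuousOn_iff] at hu
  obtain ⟨δ, hδ, hδ'⟩ := hu 1 one_pos
  obtain ⟨n, hn⟩ := exists_nat_one_div_lt hδ
  set m : ℕ := n + 1 with hm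
  have hmpos : (0:ℝ) < m := by positivity
  set u : ℕ → ℝ := fun k => s + k * (t - s) / m with hudef
  have hum : ∀ k ≤ m, u k ∈ Set.Icc (0:ℝ) 1 := by
    intro k hk
    have hk' : (k:ℝ) ≤ m := by exact_mod_cast hk
    have hk0 : (0:ℝ) ≤ k := Nat.cast_nonneg k
    obtain ⟨hs0, hs1⟩ := hs
    obtain ⟨ht0, ht1⟩ := ht
    have hc0 : (0:ℝ) ≤ (k:ℝ)/m := by positivity
    have hc1 : (k:ℝ)/m ≤ 1 := by
      rw [div_le_one hmpos]; exact hk'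
    have heq : u k = (1 - (k:ℝ)/m) * s + ((k:ℝ)/m) * t := by
      simp only [hudef]; field_simp; ring
    constructor
    · rw [heq]; have := mul_nonneg (by linarith : (0:ℝ) ≤ 1 - (k:ℝ)/m) hs0
      have := mul_nonneg hc0 ht0; linarith
    · rw [heq]
      have h1 : (1 - (k:ℝ)/m) * s ≤ (1 - (k:ℝ)/m) * 1 :=
        mul_le_mul_of_nonneg_left hs1 (by linarith)
      have h2 : ((k:ℝ)/m) * t ≤ ((k:ℝ)/m) * 1 := mul_le_mul_of_nonneg_left ht1 hc0
      linarith
  have hstep : ∀ k, |u k - u (k+1)| = |t - s| / m := by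
    intro k
    have : u k - u (k+1) = -((t - s)/m) := by
      simp only [hudef]; push_cast; field_simp; ring
    rw [this, abs_neg, abs_div, abs_of_pos hmpos]
  have hclose : ∀ k < m, dist (γ (u k)) (γ (u (k+1))) < 1 := by
    intro k hk
    apply hδ' _ (hum k (le_of_lt hk)) _ (hum (k+1) hk)
    rw [Real.dist_eq, hstep]
    have hts : |t - s| ≤ 1 := by
      rw [abs_le]; constructor <;> [linarith [hs.2, ht.1]; linarith [hs.1, ht.2]]
    calc |t - s| / m ≤ 1 / m := by gcongr
      _ = 1 / (n+1 : ℝ) := by norm_num [hm]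
      _ < δ := hn
  have hadj : ∀ k < m, starAdj (zfun (γ (u k))) (zfun (γ (u (k+1)))) := by
    intro k hk i
    apply floor_adj
    have h1 : |γ (u k) i - γ (u (k+1)) i| ≤ dist (γ (u k)) (γ (u (k+1))) := by
      rw [← Real.dist_eq]; exact coord_dist_le _ _ i
    have := hclose k hk
    have : |γ (u k) i + 1/2 - (γ (u (k+1)) i + 1/2)| = |γ (u k) i - γ (u (k+1)) i| := by
      ring_nf
    linarith [h1, hclose k hk, this.le, this.ge, abs_nonneg (γ (u k) i - γ (u (k+1)) i)]
  refine ⟨(List.range (m+1)).map (fun k => zfun (γ (u k))), ?_, ?_, ?_, ?_⟩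
  · rw [List.Chain', List.isChain_map, List.isChain_range_succ]
    intro k hk
    exact hadj k hk
  · rw [List.head?_map]
    have h0 : (List.range (m+1)).head? = some 0 := by
      rw [List.range_succ_eq_map]; rfl
    rw [h0]
    simp only [Option.map_some]
    congr 1
    rw [hsa]
    congr 1
    congr 1
    simp [hudef]
  · rw [List.getLast?_map, List.range_succ, List.getLast?_concat]
    simp only [Option.map_some]
    congr 1
    rw [htb]
    congr 2
    simp only [hudef]
    field_simp
    ring
  · intro z hz
    rw [List.mem_map] at hz
    obtain ⟨k, hk, hzk⟩ := hz
    rw [List.mem_range] at hk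
    refine ⟨u k, hum k (by omega), ?_⟩
    rw [inCube_iff]
    exact hzk.symm
end

section
/- Suppose for each unit vector v, d(0,tv)/t → μ_v almost surely as t → ∞, μ : S^{d-1} → (0,∞) is continuous, and there is K > 0 such that almost surely, for each x, eventually d(tx, ty) ≤ Kt|x−y| for all y near x. Then the convergence is uniform over the sphere: for all ε > 0, almost surely there exists T such that |d(0,tv)/t − μ_v| ≤ ε for all t ≥ T and all v ∈ S^{d-1}. -/
open Metric Filter

/-- Uniform convergence of `d(0,tv)/t` to the time constant over the sphere,
from pointwise convergence, continuity of the time constant, and a uniform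
large-scale Lipschitz estimate. -/
theorem uniform_convergence_time_constant (d : ℕ) (hd : 2 ≤ d)
    {Ω : Type*} [MeasurableSpace Ω] (μ : MeasureTheory.Measure Ω)
    [MeasureTheory.IsProbabilityMeasure μ]
    (D : Ω → EuclideanSpace ℝ (Fin d) → EuclideanSpace ℝ (Fin d) → ℝ)
    (hDnonneg : ∀ ω x y, 0 ≤ D ω x y)
    (hDsymm : ∀ ω x y, D ω x y = D ω y x)
    (hDtri : ∀ ω x y z, D ω x z ≤ D ω x y + D ω y z)
    (μv : EuclideanSpace ℝ (Fin d) → ℝ)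
    (hμcont : ContinuousOn μv (sphere (0 : EuclideanSpace ℝ (Fin d)) 1))
    (hμpos : ∀ v ∈ sphere (0 : EuclideanSpace ℝ (Fin d)) 1, 0 < μv v)
    (hpt : ∀ v ∈ sphere (0 : EuclideanSpace ℝ (Fin d)) 1,
      ∀ᵐ ω ∂μ, Tendsto (fun t : ℝ => D ω 0 (t • v) / t) atTop (nhds (μv v)))
    (K : ℝ) (hK : 0 < K)
    (hlip : ∀ᵐ ω ∂μ, ∀ x : EuclideanSpace ℝ (Fin d), ∀ ρ : ℝ, 0 < ρ →
      ∃ T : ℝ, ∀ t ≥ T, ∀ y : EuclideanSpace ℝ (Fin d),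
        ‖x - y‖ ≤ ρ → D ω (t • x) (t • y) ≤ K * t * ρ) :
    ∀ ε : ℝ, 0 < ε → ∀ᵐ ω ∂μ, ∃ T : ℝ, ∀ t ≥ T,
      ∀ v ∈ sphere (0 : EuclideanSpace ℝ (Fin d)) 1,
        |D ω 0 (t • v) / t - μv v| ≤ ε := by

  intro ε hε
  have hsph : IsCompact (sphere (0 : EuclideanSpace ℝ (Fin d)) 1) := isCompact_sphere _ _
  have huc : UniformContinuousOn μv (sphere (0 : EuclideanSpace ℝ (Fin d)) 1) :=
    hsph.uniformContinuousOn_of_continuous hμcont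
  rw [Metric.uniformContinuousOn_iff] at huc
  obtain ⟨δ, hδpos, hδ⟩ := huc (ε/3) (by linarith)
  set ρ := min δ (ε/(3*K)) with hρdef
  have hρpos : 0 < ρ := lt_min hδpos (by positivity)
  have hcover : sphere (0 : EuclideanSpace ℝ (Fin d)) 1 ⊆
      ⋃ i : sphere (0 : EuclideanSpace ℝ (Fin d)) 1, ball (i : EuclideanSpace ℝ (Fin d)) ρ :=
    fun v hv => Set.mem_iUnion.2 ⟨⟨v, hv⟩, mem_ball_self hρpos⟩
  obtain ⟨t, ht⟩ := hsph.elim_finite_subcover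
    (fun i : sphere (0 : EuclideanSpace ℝ (Fin d)) 1 => ball (i : EuclideanSpace ℝ (Fin d)) ρ)
    (fun i => isOpen_ball) hcover
  have h1 : ∀ᵐ ω ∂μ, ∀ i : t, Tendsto
      (fun s : ℝ => D ω 0 (s • ((i : sphere (0 : EuclideanSpace ℝ (Fin d)) 1) :
        EuclideanSpace ℝ (Fin d))) / s) atTop (nhds (μv i)) :=
    MeasureTheory.ae_all_iff.2 fun i => hpt _ i.1.2
  filter_upwards [h1, hlip] with ω hω hωlip
  have hT1 : ∀ i : t, ∃ T1 : ℝ, ∀ s ≥ T1,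
      |D ω 0 (s • ((i : sphere (0 : EuclideanSpace ℝ (Fin d)) 1) :
        EuclideanSpace ℝ (Fin d))) / s - μv i| < ε/3 := by
    intro i
    have := (Metric.tendsto_atTop.1 (hω i)) (ε/3) (by linarith)
    simpa [Real.dist_eq] using this
  choose T1 hT1 using hT1
  have hT2 : ∀ i : t, ∃ T2 : ℝ, ∀ s ≥ T2, ∀ y : EuclideanSpace ℝ (Fin d),
      ‖((i : sphere (0 : EuclideanSpace ℝ (Fin d)) 1) : EuclideanSpace ℝ (Fin d)) - y‖ ≤ ρ →
        D ω (s • ((i : sphere (0 : EuclideanSpace ℝ (Fin d)) 1) :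
          EuclideanSpace ℝ (Fin d))) (s • y) ≤ K * s * ρ :=
    fun i => hωlip _ ρ hρpos
  choose T2 hT2 using hT2
  obtain ⟨B, hB⟩ := (Set.finite_range fun i : t => max (T1 i) (T2 i)).bddAbove
  refine ⟨max B 1, fun s hs v hv => ?_⟩
  have hs1 : (1:ℝ) ≤ s := le_trans (le_max_right _ _) hs
  have hspos : (0:ℝ) < s := lt_of_lt_of_le one_pos hs1
  obtain ⟨i, hi, hvi⟩ := Set.mem_iUnion₂.1 (ht hv)
  have hiB : max (T1 ⟨i, hi⟩) (T2 ⟨i, hi⟩) ≤ B := hB ⟨⟨i, hi⟩, rfl⟩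
  have hsB : B ≤ s := le_trans (le_max_left _ _) hs
  have hsT1 : T1 ⟨i, hi⟩ ≤ s := le_trans (le_trans (le_max_left _ _) hiB) hsB
  have hsT2 : T2 ⟨i, hi⟩ ≤ s := le_trans (le_trans (le_max_right _ _) hiB) hsB
  have hmid := hT1 ⟨i, hi⟩ s hsT1
  have hdvi : dist v (i : EuclideanSpace ℝ (Fin d)) < ρ := mem_ball.1 hvi
  have hnorm : ‖(i : EuclideanSpace ℝ (Fin d)) - v‖ ≤ ρ := by
    rw [← dist_eq_norm, dist_comm]
    exact le_of_lt hdvi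
  have hlipb := hT2 ⟨i, hi⟩ s hsT2 v hnorm
  -- first term
  have htri1 := hDtri ω 0 (s • (i : EuclideanSpace ℝ (Fin d))) (s • v)
  have htri2 := hDtri ω 0 (s • v) (s • (i : EuclideanSpace ℝ (Fin d)))
  have hsymm := hDsymm ω (s • v) (s • (i : EuclideanSpace ℝ (Fin d)))
  have habs : |D ω 0 (s • v) - D ω 0 (s • (i : EuclideanSpace ℝ (Fin d)))| ≤
      D ω (s • (i : EuclideanSpace ℝ (Fin d))) (s • v) := by
    rw [abs_sub_le_iff]
    constructor <;> linarith
  have hKρ : K * ρ ≤ ε/3 := by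
    have h1 : ρ ≤ ε/(3*K) := min_le_right _ _
    calc K * ρ ≤ K * (ε/(3*K)) := by gcongr
      _ = ε/3 := by field_simp
  have hfirst : |D ω 0 (s • v) / s - D ω 0 (s • (i : EuclideanSpace ℝ (Fin d))) / s| ≤ ε/3 := by
    rw [div_sub_div_same, abs_div, abs_of_pos hspos, div_le_iff₀ hspos]
    calc |D ω 0 (s • v) - D ω 0 (s • (i : EuclideanSpace ℝ (Fin d)))|
        ≤ D ω (s • (i : EuclideanSpace ℝ (Fin d))) (s • v) := habs
      _ ≤ K * s * ρ := hlipb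
      _ = (K * ρ) * s := by ring
      _ ≤ (ε/3) * s := by nlinarith
  have hthird : |μv (i : EuclideanSpace ℝ (Fin d)) - μv v| < ε/3 := by
    have := hδ (i : EuclideanSpace ℝ (Fin d)) i.2 v hv
      (by rw [dist_comm]; exact lt_of_lt_of_le hdvi (min_le_left _ _))
    simpa [Real.dist_eq] using this
  have h1 := abs_sub_le (D ω 0 (s • v) / s) (D ω 0 (s • (i : EuclideanSpace ℝ (Fin d))) / s) (μv v)
  have h2 := abs_sub_le (D ω 0 (s • (i : EuclideanSpace ℝ (Fin d))) / s)
    (μv (i : EuclideanSpace ℝ (Fin d))) (μv v)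
  linarith
end
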